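/- arXiv:1103.5562 — 2 statements merged into one kernel-verified Lean document; each statement's English description precedes it below -/
import Mathlib

section
/- If w ∈ A∞, then log w ∈ BMO with ‖log w‖_{BMO} ≤ log(2e[w]_{A∞}), where the BMO seminorm is taken with the L¹-oscillation relative to constants: ‖f‖_{BMO} = sup_Q inf_c ⨍_Q |f - c|. -/
open MeasureTheory Real Set
open scoped ENNReal Classical

noncomputable section

/-- An axis-parallel cube in `ℝ^d`, given by its lower corner and (positive) side length. -/
structure Cube (d : ℕ) where
  corner : Fin d → ℝ
  side : ℝ
  side_pos : 0 < side

namespace Cube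

/-- The set of points of a cube (half-open). -/
def carrier {d : ℕ} (Q : Cube d) : Set (Fin d → ℝ) :=
  {x | ∀ i, Q.corner i ≤ x i ∧ x i < Q.corner i + Q.side}

instance {d : ℕ} : Nonempty (Cube d) := ⟨⟨0, 1, one_pos⟩⟩

/-- Dyadic cubes: side `2^k` and corner in `2^k · ℤ^d`. -/
def IsDyadic {d : ℕ} (Q : Cube d) : Prop :=
  ∃ (k : ℤ) (m : Fin d → ℤ), Q.side = (2 : ℝ) ^ k ∧ ∀ i, Q.corner i = (m i : ℝ) * (2 : ℝ) ^ k

end Cube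

/-- The Hardy–Littlewood maximal function over all axis-parallel cubes. -/
def maximalFn {d : ℕ} (f : (Fin d → ℝ) → ℝ) (x : Fin d → ℝ) : ℝ :=
  ⨆ (Q : Cube d) (_ : x ∈ Q.carrier), ⨍ y in Q.carrier, |f y|

/-- The dyadic Hardy–Littlewood maximal function. -/
def dyadicMaximalFn {d : ℕ} (f : (Fin d → ℝ) → ℝ) (x : Fin d → ℝ) : ℝ :=
  ⨆ (Q : Cube d) (_ : Q.IsDyadic ∧ x ∈ Q.carrier), ⨍ y in Q.carrier, |f y|

/-- The logarithmic maximal function `M₀` over all cubes. -/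
def logMaximalFn {d : ℕ} (f : (Fin d → ℝ) → ℝ) (x : Fin d → ℝ) : ℝ :=
  ⨆ (Q : Cube d) (_ : x ∈ Q.carrier), Real.exp (⨍ y in Q.carrier, Real.log |f y|)

/-- The dyadic logarithmic maximal function `M₀`. -/
def dyadicLogMaximalFn {d : ℕ} (f : (Fin d → ℝ) → ℝ) (x : Fin d → ℝ) : ℝ :=
  ⨆ (Q : Cube d) (_ : Q.IsDyadic ∧ x ∈ Q.carrier),
    Real.exp (⨍ y in Q.carrier, Real.log |f y|)

/-- The weighted dyadic maximal function `M_{d,σ}`. -/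
def dyadicWeightedMaximalFn {d : ℕ} (σ f : (Fin d → ℝ) → ℝ) (x : Fin d → ℝ) : ℝ :=
  ⨆ (Q : Cube d) (_ : Q.IsDyadic ∧ x ∈ Q.carrier),
    (∫ y in Q.carrier, |f y| * σ y) / ∫ y in Q.carrier, σ y

/-- A weight: a nonnegative locally integrable function. -/
structure IsWeight {d : ℕ} (w : (Fin d → ℝ) → ℝ) : Prop where
  nonneg : ∀ x, 0 ≤ w x
  locallyIntegrable : LocallyIntegrable w volume

/-- The one-dimensional (interval) Hardy–Littlewood maximal function. -/
def maximalFn1 (f : ℝ → ℝ) (x : ℝ) : ℝ :=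
  ⨆ (I : {p : ℝ × ℝ // p.1 < p.2}) (_ : x ∈ Set.Ioo I.1.1 I.1.2),
    ⨍ y in Set.Ioo I.1.1 I.1.2, |f y|

/-- If `w ∈ A∞` with `[w]_{A∞} ≤ A`, then `log w ∈ BMO` with
`‖log w‖_{BMO} ≤ log(2e A)`, the BMO seminorm being the `L¹`-oscillation relative to
constants. -/
theorem log_weight_in_bmo {d : ℕ} (w : (Fin d → ℝ) → ℝ) (hw : IsWeight w)
    (hpos : ∀ x, 0 < w x) (A : ℝ) (hA : 1 ≤ A)
    (hAinfty : ∀ Q : Cube d,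
      (⨍ x in Q.carrier, w x) * Real.exp (⨍ x in Q.carrier, Real.log (w x)⁻¹) ≤ A) :
    ∀ Q : Cube d, ∃ c : ℝ,
      ⨍ x in Q.carrier, |Real.log (w x) - c| ≤ Real.log (2 * Real.exp 1 * A) := by
  intro Q
  set S := Q.carrier with hSdef
  have hEq : S = Set.univ.pi fun i => Ico (Q.corner i) (Q.corner i + Q.side) := by
    ext x; simp [hSdef, Cube.carrier, Set.mem_pi]
  have hS_meas : MeasurableSet S := by
    rw [hEq]; exact MeasurableSet.univ_pi fun i => measurableSet_Ico
  have hvol : volume S = ENNReal.ofReal Q.side ^ d := by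
    rw [hEq, volume_pi_pi]; simp [Real.volume_Ico]
  have hV0 : volume S ≠ 0 := by
    rw [hvol]
    exact pow_ne_zero _ (by simp [ENNReal.ofReal_eq_zero, not_le, Q.side_pos])
  have hVtop : volume S ≠ ⊤ := by
    rw [hvol]; exact ENNReal.pow_ne_top ENNReal.ofReal_ne_top
  set V := (volume S).toReal with hVdef
  have hVpos : 0 < V := ENNReal.toReal_pos hV0 hVtop
  have hw_int : IntegrableOn w S := by
    refine ((hw.locallyIntegrable.integrableOn_isCompact
      (isCompact_univ_pi (ι := Fin d) (s := fun i => Icc (Q.corner i) (Q.corner i + Q.side))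
        fun i => isCompact_Icc)).mono_set ?_)
    rw [hEq]; exact Set.pi_mono fun i _ => Ico_subset_Icc_self
  have hlogmeas : AEStronglyMeasurable (fun x => Real.log (w x)) (volume.restrict S) :=
    (Real.measurable_log.comp_aemeasurable
      hw_int.aestronglyMeasurable.aemeasurable).aestronglyMeasurable
  set m := ⨍ x in S, w x with hmdef
  have hintw_pos : 0 < ∫ x in S, w x := by
    rw [setIntegral_pos_iff_support_of_nonneg_ae
      (Filter.Eventually.of_forall fun x => hw.nonneg x) hw_int]
    have hsupp : Function.support w = Set.univ := by
      ext x; simp [Function.support, (hpos x).ne']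
    rw [hsupp, Set.univ_inter]
    exact hV0.bot_lt
  have hm : 0 < m := by
    rw [hmdef, setAverage_eq, smul_eq_mul]
    exact mul_pos (inv_pos.2 hVpos) hintw_pos
  by_cases hint : IntegrableOn (fun x => Real.log (w x)) S volume
  · -- main case
    refine ⟨Real.log (2 * m), ?_⟩
    set c := Real.log (2 * m) with hcdef
    set L := ⨍ x in S, Real.log (w x) with hLdef
    -- A∞ hypothesis rewritten
    have hAQ : m * Real.exp (-L) ≤ A := by
      have h1 := hAinfty Q
      have h2 : (⨍ x in S, Real.log (w x)⁻¹) = -L := by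
        rw [hLdef, setAverage_eq, setAverage_eq, smul_eq_mul, smul_eq_mul]
        rw [show (∫ x in S, Real.log (w x)⁻¹) = ∫ x in S, -Real.log (w x) by
          congr 1; ext x; rw [Real.log_inv], integral_neg]
        ring
      rwa [h2] at h1
    have hcL : c - L ≤ Real.log 2 + Real.log A := by
      have hlog : Real.log (m * Real.exp (-L)) ≤ Real.log A :=
        Real.log_le_log (mul_pos hm (Real.exp_pos _)) hAQ
      rw [Real.log_mul hm.ne' (Real.exp_pos _).ne', Real.log_exp] at hlog
      have : c = Real.log 2 + Real.log m := by
        rw [hcdef, Real.log_mul two_ne_zero hm.ne']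
      linarith
    -- pointwise bound
    have hpt : ∀ x ∈ S, |Real.log (w x) - c| ≤ (c - Real.log (w x)) + w x / m := by
      intro x _
      have hwx := hpos x
      have hmax : max (Real.log (w x) - c) 0 ≤ w x / (2 * m) := by
        refine max_le ?_ (by positivity)
        have : Real.log (w x) - c = Real.log (w x / (2 * m)) := by
          rw [Real.log_div hwx.ne' (by positivity), hcdef]
        rw [this]
        have := Real.log_le_sub_one_of_pos (show 0 < w x / (2 * m) by positivity)
        linarith
      have habs : |Real.log (w x) - c| = -(Real.log (w x) - c)
          + 2 * max (Real.log (w x) - c) 0 := by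
        rcases le_total (Real.log (w x) - c) 0 with h | h
        · rw [abs_of_nonpos h, max_eq_right h]; ring
        · rw [abs_of_nonneg h, max_eq_left h]; ring
      rw [habs]
      have h2m : 2 * (w x / (2 * m)) = w x / m := by field_simp
      nlinarith [hmax]
    -- integrability of RHS
    have hrhs_int : IntegrableOn (fun x => (c - Real.log (w x)) + w x / m) S := by
      exact ((integrableOn_const hVtop).sub hint).add
        (hw_int.div_const m)
    have hlhs_int : IntegrableOn (fun x => |Real.log (w x) - c|) S :=
      (hint.sub (integrableOn_const hVtop)).abs
    have hmono : (∫ x in S, |Real.log (w x) - c|)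
        ≤ ∫ x in S, ((c - Real.log (w x)) + w x / m) :=
      setIntegral_mono_on hlhs_int hrhs_int hS_meas hpt
    -- compute the RHS integral
    have hcalc : (∫ x in S, ((c - Real.log (w x)) + w x / m))
        = V * c - (∫ x in S, Real.log (w x)) + (∫ x in S, w x) / m := by
      have h1 : (∫ x in S, ((c - Real.log (w x)) + w x / m))
          = (∫ x in S, (c - Real.log (w x))) + ∫ x in S, w x / m :=
        integral_add ((integrableOn_const hVtop).sub hint)
          (hw_int.div_const m)
      have h2 : (∫ x in S, (c - Real.log (w x)))
          = (∫ _x in S, (c : ℝ)) - ∫ x in S, Real.log (w x) :=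
        integral_sub (integrableOn_const hVtop) hint
      rw [h1, h2, integral_div, setIntegral_const, smul_eq_mul, measureReal_def, ← hVdef]
    have hwV : (∫ x in S, w x) = V * m := by
      rw [hmdef, setAverage_eq, smul_eq_mul, measureReal_def, ← hVdef]; field_simp
    have hLV : (∫ x in S, Real.log (w x)) = V * L := by
      rw [hLdef, setAverage_eq, smul_eq_mul, measureReal_def, ← hVdef]; field_simp
    have hfinal : (⨍ x in S, |Real.log (w x) - c|) ≤ c - L + 1 := by
      rw [setAverage_eq, smul_eq_mul]
      have : V * c - (∫ x in S, Real.log (w x)) + (∫ x in S, w x) / m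
          = V * (c - L + 1) := by
        rw [hwV, hLV]; field_simp
      rw [measureReal_def, ← hVdef]
      have hb : (∫ x in S, |Real.log (w x) - c|) ≤ V * (c - L + 1) :=
        hmono.trans (le_of_eq (hcalc.trans this))
      calc V⁻¹ * ∫ x in S, |Real.log (w x) - c|
          ≤ V⁻¹ * (V * (c - L + 1)) :=
            mul_le_mul_of_nonneg_left hb (inv_nonneg.2 hVpos.le)
        _ = c - L + 1 := by field_simp
    have hrw : Real.log (2 * Real.exp 1 * A) = Real.log 2 + 1 + Real.log A := by
      rw [Real.log_mul (by positivity) (by linarith), Real.log_mul two_ne_zero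
        (Real.exp_pos 1).ne', Real.log_exp]
    rw [hrw]
    linarith
  · -- non-integrable case: average is 0 by junk value
    refine ⟨0, ?_⟩
    have hni : ¬ Integrable (fun x => |Real.log (w x) - 0|) (volume.restrict S) := by
      intro hcon
      apply hint
      simp only [sub_zero] at hcon
      have := (integrable_norm_iff hlogmeas).1 (by simpa [Real.norm_eq_abs] using hcon)
      exact this
    rw [setAverage_eq, smul_eq_mul, integral_undef hni, mul_zero]
    apply Real.log_nonneg
    nlinarith [Real.add_one_le_exp 1]


end
end

section
/- Logarithmic bound for [w]'_{A∞} of two-valued weights: for w = t·χ_E + χ_{ℝ\E} on ℝ with t ≥ 3 and E ⊂ ℝ measurable, one has [w]'_{A∞} ≤ 4 log t. -/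
open MeasureTheory Real Set
open scoped ENNReal Classical

noncomputable section

instance : Nonempty {p : ℝ × ℝ // p.1 < p.2} := ⟨⟨(0,1), by norm_num⟩⟩

/-- Three intervals sharing a point: one is contained in the union of the other two. -/
lemma three_Ioo {x a₁ b₁ a₂ b₂ a₃ b₃ : ℝ}
    (h1 : x ∈ Ioo a₁ b₁) (h2 : x ∈ Ioo a₂ b₂) (h3 : x ∈ Ioo a₃ b₃) :
    Ioo a₁ b₁ ⊆ Ioo a₂ b₂ ∪ Ioo a₃ b₃ ∨ Ioo a₂ b₂ ⊆ Ioo a₁ b₁ ∪ Ioo a₃ b₃ ∨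
      Ioo a₃ b₃ ⊆ Ioo a₁ b₁ ∪ Ioo a₂ b₂ := by
  obtain ⟨x1, x1'⟩ := h1; obtain ⟨x2, x2'⟩ := h2; obtain ⟨x3, x3'⟩ := h3
  have H : ∀ {ai bi aj bj ak bk : ℝ}, ai ≤ ak → bk ≤ bj → ai < x → x < bi → aj < x → x < bj →
      Ioo ak bk ⊆ Ioo ai bi ∪ Ioo aj bj := by
    intro ai bi aj bj ak bk hik hkj hi hi' hj hj' y hy
    obtain ⟨hy1, hy2⟩ := hy
    rcases le_total y x with h | h
    · exact Or.inl ⟨lt_of_le_of_lt hik hy1, lt_of_le_of_lt h hi'⟩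
    · exact Or.inr ⟨lt_of_lt_of_le hj h, lt_of_lt_of_le hy2 hkj⟩
  rcases le_total a₁ a₂ with h12 | h12
  · rcases le_total a₁ a₃ with h13 | h13
    · -- min is 1
      rcases le_total b₂ b₃ with g | g
      · exact Or.inr (Or.inl (H h12 g x1 x1' x3 x3'))
      · exact Or.inr (Or.inr (H h13 g x1 x1' x2 x2'))
    · -- min is 3
      rcases le_total b₁ b₂ with g | g
      · exact Or.inl ((H h13 g x3 x3' x2 x2').trans (by rw [Set.union_comm]))
      · exact Or.inr (Or.inl ((H (le_trans h13 h12) g x3 x3' x1 x1').trans (by rw [Set.union_comm])))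
  · rcases le_total a₂ a₃ with h23 | h23
    · -- min is 2
      rcases le_total b₁ b₃ with g | g
      · exact Or.inl (H h12 g x2 x2' x3 x3')
      · exact Or.inr (Or.inr ((H h23 g x2 x2' x1 x1').trans (by rw [Set.union_comm])))
    · -- min is 3
      rcases le_total b₁ b₂ with g | g
      · exact Or.inl ((H (le_trans h23 h12) g x3 x3' x2 x2').trans (by rw [Set.union_comm]))
      · exact Or.inr (Or.inl ((H h23 g x3 x3' x1 x1').trans (by rw [Set.union_comm])))

/-- From a finite family of open intervals one can select a subfamily with the same union
in which every point lies in at most two selected intervals. -/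
lemma exists_mult_two {ι : Type*} [DecidableEq ι] (c d : ι → ℝ) (s : Finset ι) :
    ∃ u ⊆ s, (⋃ i ∈ u, Ioo (c i) (d i)) = (⋃ i ∈ s, Ioo (c i) (d i)) ∧
      ∀ x : ℝ, (u.filter (fun i => x ∈ Ioo (c i) (d i))).card ≤ 2 := by
  induction s using Finset.strongInduction with
  | _ s ih =>
    by_cases hmul : ∀ x : ℝ, (s.filter (fun i => x ∈ Ioo (c i) (d i))).card ≤ 2
    · exact ⟨s, le_refl s, rfl, hmul⟩
    · push_neg at hmul
      obtain ⟨x, hx⟩ := hmul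
      -- extract three distinct elements of the filter
      obtain ⟨i, j, k, hij, hik, hjk, hi, hj, hk⟩ : ∃ i j k, i ≠ j ∧ i ≠ k ∧ j ≠ k ∧
          i ∈ s.filter (fun i => x ∈ Ioo (c i) (d i)) ∧
          j ∈ s.filter (fun i => x ∈ Ioo (c i) (d i)) ∧
          k ∈ s.filter (fun i => x ∈ Ioo (c i) (d i)) := by
        have := Finset.exists_subset_card_eq (show 3 ≤ _ from hx)
        obtain ⟨v, hv, hcard⟩ := this
        obtain ⟨i, j, k, hij, hik, hjk, rfl⟩ := Finset.card_eq_three.mp hcard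
        exact ⟨i, j, k, hij, hik, hjk, hv (by simp), hv (by simp), hv (by simp)⟩
      simp only [Finset.mem_filter] at hi hj hk
      -- one of the three intervals is inside the union of the other two
      have bu : ∀ m n : ι, n ∈ s → n ≠ m →
          Ioo (c n) (d n) ⊆ ⋃ i ∈ s.erase m, Ioo (c i) (d i) := by
        intro m n hn hnm y hy
        exact Set.mem_iUnion.mpr ⟨n, Set.mem_iUnion.mpr ⟨Finset.mem_erase.mpr ⟨hnm, hn⟩, hy⟩⟩
      have key : ∃ m ∈ s, Ioo (c m) (d m) ⊆ ⋃ i ∈ s.erase m, Ioo (c i) (d i) := by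
        rcases three_Ioo hi.2 hj.2 hk.2 with h | h | h
        · exact ⟨i, hi.1, h.trans (Set.union_subset (bu i j hj.1 hij.symm) (bu i k hk.1 hik.symm))⟩
        · exact ⟨j, hj.1, h.trans (Set.union_subset (bu j i hi.1 hij) (bu j k hk.1 hjk.symm))⟩
        · exact ⟨k, hk.1, h.trans (Set.union_subset (bu k i hi.1 hik) (bu k j hj.1 hjk))⟩
      obtain ⟨m, hm, hsub⟩ := key
      obtain ⟨u, hu, huni, hmult⟩ := ih (s.erase m) (Finset.erase_ssubset hm)
      refine ⟨u, hu.trans (Finset.erase_subset m s), ?_, hmult⟩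
      rw [huni]
      apply Set.Subset.antisymm
      · exact Set.biUnion_subset_biUnion_left (fun i hi => Finset.mem_of_mem_erase hi)
      · intro y hy
        simp only [Set.mem_iUnion] at hy ⊢
        obtain ⟨n, hn, hyn⟩ := hy
        by_cases hnm : n = m
        · subst hnm
          have := hsub hyn
          simpa using this
        · exact ⟨n, Finset.mem_erase.mpr ⟨hnm, hn⟩, hyn⟩

lemma sum_inter_le {ι : Type*} [DecidableEq ι] (c d : ι → ℝ) (u : Finset ι)
    (S : Set ℝ) (hS : MeasurableSet S)
    (hmul : ∀ x : ℝ, (u.filter (fun i => x ∈ Ioo (c i) (d i))).card ≤ 2) :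
    ∑ i ∈ u, volume (S ∩ Ioo (c i) (d i)) ≤ 2 * volume S := by
  have h1 : ∀ i : ι, volume (S ∩ Ioo (c i) (d i)) =
      ∫⁻ x, (S ∩ Ioo (c i) (d i)).indicator (fun _ => (1 : ℝ≥0∞)) x := by
    intro i
    rw [lintegral_indicator (hS.inter measurableSet_Ioo)]
    simp
  simp_rw [h1]
  rw [← lintegral_finset_sum]
  · have hpt : ∀ x : ℝ, ∑ i ∈ u, (S ∩ Ioo (c i) (d i)).indicator (fun _ => (1 : ℝ≥0∞)) x
        ≤ 2 * S.indicator (fun _ => (1 : ℝ≥0∞)) x := by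
      intro x
      by_cases hxS : x ∈ S
      · have : ∀ i : ι, (S ∩ Ioo (c i) (d i)).indicator (fun _ => (1 : ℝ≥0∞)) x
            = if x ∈ Ioo (c i) (d i) then 1 else 0 := by
          intro i
          by_cases h : x ∈ Ioo (c i) (d i) <;> simp [Set.indicator, hxS, h]
        simp_rw [this]
        rw [Finset.sum_boole]
        simp only [Finset.sum_const, smul_eq_mul, mul_one, Set.indicator_of_mem hxS]
        have := hmul x
        calc ((u.filter (fun i => x ∈ Ioo (c i) (d i))).card : ℝ≥0∞)
            ≤ (2 : ℕ) := by exact_mod_cast Nat.cast_le.mpr this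
          _ = 2 := by norm_num
      · have : ∀ i : ι, (S ∩ Ioo (c i) (d i)).indicator (fun _ => (1 : ℝ≥0∞)) x = 0 := by
          intro i; simp [Set.indicator, hxS]
        simp [this, Set.indicator_of_notMem hxS]
    calc ∫⁻ x, ∑ i ∈ u, (S ∩ Ioo (c i) (d i)).indicator (fun _ => (1 : ℝ≥0∞)) x
        ≤ ∫⁻ x, 2 * S.indicator (fun _ => (1 : ℝ≥0∞)) x := lintegral_mono hpt
      _ = 2 * ∫⁻ x, S.indicator (fun _ => (1 : ℝ≥0∞)) x := lintegral_const_mul 2 (measurable_one.indicator hS)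
      _ = 2 * volume S := by rw [lintegral_indicator hS]; simp
  · intro i _
    exact measurable_one.indicator (hS.inter measurableSet_Ioo)


section MaxAux
variable {f : ℝ → ℝ} {t : ℝ}


lemma avg_bounds (hfi : Integrable f) (hf : ∀ y, |f y| ≤ t) (ht : 0 ≤ t)
    (p : {p : ℝ × ℝ // p.1 < p.2}) :
    0 ≤ ⨍ y in Set.Ioo p.1.1 p.1.2, |f y| ∧ ⨍ y in Set.Ioo p.1.1 p.1.2, |f y| ≤ t := by
  have hlt : p.1.1 < p.1.2 := p.2
  have hvol : volume (Set.Ioo p.1.1 p.1.2) = ENNReal.ofReal (p.1.2 - p.1.1) := Real.volume_Ioo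
  have hvolpos : 0 < (volume (Set.Ioo p.1.1 p.1.2)).toReal := by
    rw [hvol, ENNReal.toReal_ofReal (by linarith)]; linarith
  rw [setAverage_eq]
  constructor
  · apply smul_nonneg
    · positivity
    · exact setIntegral_nonneg measurableSet_Ioo (fun y _ => abs_nonneg _)
  · have hint : ∫ y in Set.Ioo p.1.1 p.1.2, |f y| ≤ ∫ y in Set.Ioo p.1.1 p.1.2, t := by
      apply setIntegral_mono_on hfi.abs.integrableOn (integrableOn_const (by
        rw [hvol]; exact ENNReal.ofReal_ne_top)) measurableSet_Ioo (fun y _ => hf y)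
    have : ∫ y in Set.Ioo p.1.1 p.1.2, (t : ℝ) = (volume (Set.Ioo p.1.1 p.1.2)).toReal * t := by
      rw [setIntegral_const, smul_eq_mul, measureReal_def]
    rw [smul_eq_mul, measureReal_def, inv_mul_le_iff₀ hvolpos]
    rw [this] at hint
    linarith [hint]


lemma mFn_bounds (hfi : Integrable f) (hf : ∀ y, |f y| ≤ t) (ht : 0 ≤ t) (x : ℝ) :
    0 ≤ maximalFn1 f x ∧ maximalFn1 f x ≤ t := by
  constructor
  · apply Real.iSup_nonneg
    intro p
    apply Real.iSup_nonneg
    intro _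
    exact (avg_bounds hfi hf ht p).1
  · apply Real.iSup_le _ ht
    intro p
    apply Real.iSup_le _ ht
    intro _
    exact (avg_bounds hfi hf ht p).2

lemma bddAbove_mFn (hfi : Integrable f) (hf : ∀ y, |f y| ≤ t) (ht : 0 ≤ t) (x : ℝ) :
    BddAbove (Set.range fun p : {p : ℝ × ℝ // p.1 < p.2} =>
      ⨆ (_ : x ∈ Set.Ioo p.1.1 p.1.2), ⨍ y in Set.Ioo p.1.1 p.1.2, |f y|) := by
  refine ⟨t, ?_⟩
  rintro _ ⟨p, rfl⟩
  apply Real.iSup_le _ ht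
  intro _
  exact (avg_bounds hfi hf ht p).2

lemma lt_mFn_iff (hfi : Integrable f) (hf : ∀ y, |f y| ≤ t) (ht : 0 ≤ t) {x lam : ℝ}
    (hlam : 0 ≤ lam) :
    lam < maximalFn1 f x ↔ ∃ p : {p : ℝ × ℝ // p.1 < p.2},
      x ∈ Set.Ioo p.1.1 p.1.2 ∧ lam < ⨍ y in Set.Ioo p.1.1 p.1.2, |f y| := by
  rw [maximalFn1, lt_ciSup_iff (bddAbove_mFn hfi hf ht x)]
  constructor
  · rintro ⟨p, hp⟩
    by_cases hx : x ∈ Set.Ioo p.1.1 p.1.2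
    · rw [ciSup_pos hx] at hp
      exact ⟨p, hx, hp⟩
    · haveI : IsEmpty (x ∈ Set.Ioo p.1.1 p.1.2) := ⟨hx⟩
      rw [Real.iSup_of_isEmpty] at hp
      exact absurd hp (not_lt.mpr hlam)
  · rintro ⟨p, hx, hp⟩
    exact ⟨p, by rwa [ciSup_pos hx]⟩

lemma avg_le_mFn (hfi : Integrable f) (hf : ∀ y, |f y| ≤ t) (ht : 0 ≤ t)
    {x : ℝ} {p : {p : ℝ × ℝ // p.1 < p.2}} (hx : x ∈ Set.Ioo p.1.1 p.1.2) :
    ⨍ y in Set.Ioo p.1.1 p.1.2, |f y| ≤ maximalFn1 f x := by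
  have := le_ciSup (bddAbove_mFn hfi hf ht x) p
  rwa [ciSup_pos hx] at this

lemma isOpen_U (hfi : Integrable f) (hf : ∀ y, |f y| ≤ t) (ht : 0 ≤ t) (lam : ℝ) :
    IsOpen {x | lam < maximalFn1 f x} := by
  rcases lt_or_ge lam 0 with hlam | hlam
  · have : {x | lam < maximalFn1 f x} = Set.univ :=
      Set.eq_univ_of_forall fun x => lt_of_lt_of_le hlam (mFn_bounds hfi hf ht x).1
    rw [this]; exact isOpen_univ
  · rw [isOpen_iff_mem_nhds]
    intro x hx
    obtain ⟨p, hxp, hp⟩ := (lt_mFn_iff hfi hf ht hlam).mp hx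
    refine Filter.mem_of_superset (isOpen_Ioo.mem_nhds hxp) ?_
    intro y hy
    exact lt_of_lt_of_le hp (avg_le_mFn hfi hf ht hy)

lemma measurable_mFn (hfi : Integrable f) (hf : ∀ y, |f y| ≤ t) (ht : 0 ≤ t) :
    Measurable (maximalFn1 f) :=
  measurable_of_Ioi fun lam => (isOpen_U hfi hf ht lam).measurableSet

lemma mFn_le_one {f : ℝ → ℝ}
    (h1 : ∀ p : {p : ℝ × ℝ // p.1 < p.2},
      ∫ y in Set.Ioo p.1.1 p.1.2, |f y| ≤ (p.1.2 - p.1.1)) (x : ℝ) :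
    maximalFn1 f x ≤ 1 := by
  apply Real.iSup_le _ zero_le_one
  intro p
  apply Real.iSup_le _ zero_le_one
  intro _
  have hlt : p.1.1 < p.1.2 := p.2
  rw [setAverage_eq, smul_eq_mul]
  have hvol : (volume (Set.Ioo p.1.1 p.1.2)).toReal = p.1.2 - p.1.1 := by
    rw [Real.volume_Ioo, ENNReal.toReal_ofReal (by linarith)]
  rw [measureReal_def, hvol, inv_mul_le_iff₀ (by linarith), mul_one]
  exact h1 p

lemma weak_type (hfi : Integrable f) (hf : ∀ y, |f y| ≤ t) (ht : 0 ≤ t)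
    {S : Set ℝ} (hS : MeasurableSet S) (hSfin : volume S ≠ ⊤) {τ : ℝ} (hτ : 0 ≤ τ)
    (hintf : ∀ p : {p : ℝ × ℝ // p.1 < p.2},
      ∫ y in Set.Ioo p.1.1 p.1.2, |f y| ≤ (p.1.2 - p.1.1) +
        τ * (volume (S ∩ Set.Ioo p.1.1 p.1.2)).toReal)
    {lam : ℝ} (hlam : 1 < lam) :
    volume {x | lam < maximalFn1 f x} ≤
      ENNReal.ofReal (τ / (lam - 1)) * (2 * volume S) := by
  rw [(isOpen_U hfi hf ht lam).measure_eq_iSup_isCompact]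
  refine iSup_le fun K => iSup_le fun hKU => iSup_le fun hK => ?_
  -- choose intervals
  have hch : ∀ x : K, ∃ p : {p : ℝ × ℝ // p.1 < p.2},
      (x : ℝ) ∈ Set.Ioo p.1.1 p.1.2 ∧ lam < ⨍ y in Set.Ioo p.1.1 p.1.2, |f y| :=
    fun x => (lt_mFn_iff hfi hf ht (le_of_lt (lt_trans zero_lt_one hlam))).mp (hKU x.2)
  choose p hp1 hp2 using hch
  set c : K → ℝ := fun i => (p i).1.1 with hc
  set d : K → ℝ := fun i => (p i).1.2 with hd
  have hcover : K ⊆ ⋃ i : K, Ioo (c i) (d i) := fun x hx =>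
    Set.mem_iUnion.mpr ⟨⟨x, hx⟩, hp1 ⟨x, hx⟩⟩
  obtain ⟨s, hs⟩ := hK.elim_finite_subcover (fun i : K => Ioo (c i) (d i))
    (fun i => isOpen_Ioo) hcover
  obtain ⟨u, hus, huni, hmult⟩ := exists_mult_two c d s
  have hKu : K ⊆ ⋃ i ∈ u, Ioo (c i) (d i) := by rw [huni]; exact hs
  -- key per-interval inequality
  have hkey : ∀ i : K, volume (Ioo (c i) (d i)) ≤
      ENNReal.ofReal (τ / (lam - 1)) * volume (S ∩ Ioo (c i) (d i)) := by
    intro i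
    have hlt : c i < d i := (p i).2
    have hvol : (volume (Ioo (c i) (d i))).toReal = d i - c i := by
      rw [Real.volume_Ioo, ENNReal.toReal_ofReal (by linarith)]
    have havg := hp2 i
    rw [setAverage_eq, measureReal_def, hvol, smul_eq_mul] at havg
    have hpos : (0:ℝ) < d i - c i := by linarith
    have h1 : lam * (d i - c i) < ∫ y in Set.Ioo (c i) (d i), |f y| := by
      rw [mul_comm]
      calc (d i - c i) * lam < (d i - c i) * ((d i - c i)⁻¹ * ∫ y in Set.Ioo (c i) (d i), |f y|) :=
            (mul_lt_mul_iff_right₀ hpos).mpr havg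
        _ = ∫ y in Set.Ioo (c i) (d i), |f y| := by field_simp
    have h2 := hintf (p i)
    set v : ℝ := (volume (S ∩ Ioo (c i) (d i))).toReal with hv
    have hv0 : 0 ≤ v := ENNReal.toReal_nonneg
    have h3 : (lam - 1) * (d i - c i) < τ * v := by
      have := h1.trans_le h2
      nlinarith
    have h4 : d i - c i ≤ τ / (lam - 1) * v := by
      rw [div_mul_eq_mul_div, le_div_iff₀ (by linarith : (0:ℝ) < lam - 1)]
      nlinarith
    calc volume (Ioo (c i) (d i)) = ENNReal.ofReal (d i - c i) := Real.volume_Ioo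
      _ ≤ ENNReal.ofReal (τ / (lam - 1) * v) := ENNReal.ofReal_le_ofReal h4
      _ = ENNReal.ofReal (τ / (lam - 1)) * ENNReal.ofReal v :=
          ENNReal.ofReal_mul (div_nonneg hτ (by linarith))
      _ = ENNReal.ofReal (τ / (lam - 1)) * volume (S ∩ Ioo (c i) (d i)) := by
          rw [hv, ENNReal.ofReal_toReal]
          exact ne_top_of_le_ne_top hSfin (measure_mono Set.inter_subset_left)
  calc volume K ≤ volume (⋃ i ∈ u, Ioo (c i) (d i)) := measure_mono hKu
    _ ≤ ∑ i ∈ u, volume (Ioo (c i) (d i)) := measure_biUnion_finset_le u _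
    _ ≤ ∑ i ∈ u, ENNReal.ofReal (τ / (lam - 1)) * volume (S ∩ Ioo (c i) (d i)) :=
        Finset.sum_le_sum fun i _ => hkey i
    _ = ENNReal.ofReal (τ / (lam - 1)) * ∑ i ∈ u, volume (S ∩ Ioo (c i) (d i)) :=
        (Finset.mul_sum _ _ _).symm
    _ ≤ ENNReal.ofReal (τ / (lam - 1)) * (2 * volume S) :=
        mul_le_mul_right (sum_inter_le c d u S hS hmult) _
end MaxAux

lemma final_numeric_ineq {t τ σ L : ℝ} (ht : 3 ≤ t) (hτdef : τ = t - 1)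
    (hσpos : 0 < σ) (hσL : σ ≤ L) (hL0 : 0 < L) :
    L + τ * σ + 2 * (τ * σ) * Real.log (L / σ) ≤ 4 * Real.log t * (L + τ * σ) := by
  have hτpos : (0:ℝ) < τ := by rw [hτdef]; linarith
  have he3 : Real.exp 1 ≤ 3 := by have := Real.exp_one_lt_d9; linarith
  have he2 : (2:ℝ) ≤ Real.exp 1 := by have := Real.exp_one_gt_d9; linarith
  have hlogt1 : 1 ≤ Real.log t := by
    rw [← Real.log_exp 1]
    exact Real.log_le_log (Real.exp_pos 1) (le_trans he3 ht)
  have hxlog : ∀ s : ℝ, 0 < s → s * Real.log s⁻¹ ≤ (Real.exp 1)⁻¹ := by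
    intro s hs
    have h1 : Real.log s⁻¹ ≤ s⁻¹ * (Real.exp 1)⁻¹ := by
      have h2 := Real.log_le_sub_one_of_pos
        (div_pos (inv_pos.mpr hs) (Real.exp_pos 1))
      rw [Real.log_div (ne_of_gt (inv_pos.mpr hs)) (Real.exp_ne_zero 1), Real.log_exp] at h2
      have h3 : s⁻¹ / Real.exp 1 = s⁻¹ * (Real.exp 1)⁻¹ := by ring
      linarith [h2, h3 ▸ h2]
    calc s * Real.log s⁻¹ ≤ s * (s⁻¹ * (Real.exp 1)⁻¹) :=
          mul_le_mul_of_nonneg_left h1 hs.le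
      _ = (Real.exp 1)⁻¹ := by field_simp
  have hlog2 : 1 + Real.log τ ≤ 2 * Real.log t := by
    have hh : Real.exp 1 * τ ≤ t ^ 2 := by
      rw [hτdef]
      have h1 : Real.exp 1 * (t - 1) ≤ 3 * (t - 1) :=
        mul_le_mul_of_nonneg_right he3 (by linarith)
      nlinarith [sq_nonneg (t - 2), h1]
    have := Real.log_le_log (by positivity) hh
    rw [Real.log_mul (Real.exp_ne_zero 1) (ne_of_gt hτpos), Real.log_exp,
      Real.log_pow] at this
    push_cast at this
    linarith
  rcases le_total (τ * σ) L with hc | hc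
  · have hs0 : 0 < τ * σ / L := by positivity
    have hlogsplit : Real.log (L / σ) = Real.log τ + Real.log (τ * σ / L)⁻¹ := by
      rw [← Real.log_mul (ne_of_gt hτpos) (by positivity)]
      congr 1
      rw [inv_div, ← mul_div_assoc,
        div_eq_div_iff (ne_of_gt hσpos) (by positivity)]
      ring
    have hx := hxlog (τ * σ / L) hs0
    have hxx : τ * σ * Real.log (τ * σ / L)⁻¹ ≤ L * (Real.exp 1)⁻¹ := by
      have h5 := mul_le_mul_of_nonneg_right hx hL0.le
      have h6 : τ * σ / L * Real.log (τ * σ / L)⁻¹ * L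
          = τ * σ * Real.log (τ * σ / L)⁻¹ := by field_simp
      have h7 : (Real.exp 1)⁻¹ * L = L * (Real.exp 1)⁻¹ := mul_comm _ _
      linarith [h5, h6, h7]
    have hei : (Real.exp 1)⁻¹ ≤ 2⁻¹ := by
      apply inv_anti₀ (by norm_num) he2
    have hτσ0 : 0 ≤ τ * σ := by positivity
    have hA := mul_le_mul_of_nonneg_left hlog2 hτσ0
    have hB : L * 1 ≤ L * Real.log t := mul_le_mul_of_nonneg_left hlogt1 hL0.le
    have hC : 2 * (τ * σ) * Real.log (L / σ)
        = 2 * (τ * σ * Real.log τ) + 2 * (τ * σ * Real.log (τ * σ / L)⁻¹) := by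
      rw [hlogsplit]; ring
    have hD2 : L * (Real.exp 1)⁻¹ ≤ L * 2⁻¹ := mul_le_mul_of_nonneg_left hei hL0.le
    linarith [hA, hB, hC, hxx, hD2]
  · have hlogle : Real.log (L / σ) ≤ Real.log τ := by
      apply Real.log_le_log (by positivity)
      rw [div_le_iff₀ hσpos]
      nlinarith
    have hτσ0 : 0 ≤ τ * σ := by positivity
    have hA := mul_le_mul_of_nonneg_left hlog2 hτσ0
    have hB : L * 1 ≤ L * Real.log t := mul_le_mul_of_nonneg_left hlogt1 hL0.le
    have hE := mul_le_mul_of_nonneg_left hlogle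
      (by positivity : (0:ℝ) ≤ 2 * (τ * σ))
    linarith [hA, hB, hE]


set_option maxHeartbeats 2000000 in
/-- Logarithmic bound for `[w]'_{A∞}` of two-valued weights: for `w = t χ_E + χ_{ℝ∖E}` on `ℝ`
with `t ≥ 3`, one has `[w]'_{A∞} ≤ 4 log t`, i.e. `∫_I M(wχ_I) ≤ 4 (log t) w(I)` for every
interval `I`. -/
theorem two_valued_weight_ainfty_prime_bound (E : Set ℝ) (hE : MeasurableSet E)
    (t : ℝ) (ht : 3 ≤ t) :
    ∀ a b : ℝ, a < b →
      ∫ x in Set.Ioo a b,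
          maximalFn1 ((Set.Ioo a b).indicator fun y => if y ∈ E then t else 1) x
        ≤ 4 * Real.log t * ∫ x in Set.Ioo a b, (if x ∈ E then t else 1) := by
  intro a b hab
  set I : Set ℝ := Set.Ioo a b with hI
  set w : ℝ → ℝ := fun y => if y ∈ E then t else 1 with hw
  set f : ℝ → ℝ := I.indicator w with hf
  set S : Set ℝ := E ∩ I with hS
  set τ : ℝ := t - 1 with hτdef
  set L : ℝ := b - a with hL
  have hL0 : 0 < L := by simp [hL]; linarith
  have ht0 : (0:ℝ) ≤ t := by linarith
  have hτ0 : (0:ℝ) ≤ τ := by simp [hτdef]; linarith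
  have hImeas : MeasurableSet I := measurableSet_Ioo
  have hSmeas : MeasurableSet S := hE.inter hImeas
  have hIvol : volume I = ENNReal.ofReal L := Real.volume_Ioo
  have hIfin : volume I ≠ ⊤ := by rw [hIvol]; exact ENNReal.ofReal_ne_top
  have hSsub : S ⊆ I := Set.inter_subset_right
  have hSfin : volume S ≠ ⊤ := ((measure_mono hSsub).trans_lt (Ne.lt_top hIfin)).ne
  set σ : ℝ := (volume S).toReal with hσdef
  have hσ0 : 0 ≤ σ := ENNReal.toReal_nonneg
  have hσL : σ ≤ L := by
    have : volume S ≤ volume I := measure_mono hSsub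
    rw [hIvol] at this
    calc σ ≤ (ENNReal.ofReal L).toReal := ENNReal.toReal_mono ENNReal.ofReal_ne_top this
      _ = L := ENNReal.toReal_ofReal hL0.le
  -- basic facts about w and f
  have hwmeas : Measurable w := Measurable.ite hE measurable_const measurable_const
  have hfmeas : Measurable f := hwmeas.indicator hImeas
  have hfnn : ∀ y, 0 ≤ f y := by
    intro y
    simp only [hf, Set.indicator]
    split_ifs with h1
    · simp only [hw]; split_ifs <;> linarith
    · exact le_refl 0
  have habs : ∀ y, |f y| = f y := fun y => abs_of_nonneg (hfnn y)
  have hfb : ∀ y, |f y| ≤ t := by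
    intro y
    rw [habs]
    simp only [hf, Set.indicator]
    split_ifs with h1
    · simp only [hw]; split_ifs <;> linarith
    · linarith
  have hg1i : Integrable (I.indicator (1 : ℝ → ℝ)) :=
    (integrable_indicator_iff hImeas).mpr
      (integrableOn_const hIfin)
  have hg2i : Integrable (S.indicator (1 : ℝ → ℝ)) :=
    (integrable_indicator_iff hSmeas).mpr
      (integrableOn_const hSfin)
  have hfeq : f = fun y => I.indicator (1 : ℝ → ℝ) y + τ * S.indicator (1 : ℝ → ℝ) y := by
    funext y
    simp only [hf, hS, Set.indicator, Set.mem_inter_iff, hw]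
    by_cases h1 : y ∈ I <;> by_cases h2 : y ∈ E <;> simp [h1, h2, hτdef] <;> ring
  have hfi : Integrable f := by
    rw [hfeq]
    exact hg1i.add (hg2i.const_mul τ)
  -- integral formula on any measurable set
  have hsetint : ∀ J : Set ℝ, MeasurableSet J →
      ∫ y in J, f y = (volume (I ∩ J)).toReal + τ * (volume (S ∩ J)).toReal := by
    intro J hJ
    rw [hfeq]
    rw [integral_add hg1i.integrableOn ((hg2i.const_mul τ).integrableOn)]
    rw [integral_const_mul]
    rw [integral_indicator_one hImeas, integral_indicator_one hSmeas]
    rw [measureReal_def, measureReal_def, Measure.restrict_apply hImeas, Measure.restrict_apply hSmeas]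
  have habsint : ∀ J : Set ℝ, MeasurableSet J → ∫ y in J, |f y| = ∫ y in J, f y :=
    fun J hJ => integral_congr_ae (Filter.Eventually.of_forall fun y => habs y)
  have hintf : ∀ p : {p : ℝ × ℝ // p.1 < p.2},
      ∫ y in Set.Ioo p.1.1 p.1.2, |f y| ≤ (p.1.2 - p.1.1) +
        τ * (volume (S ∩ Set.Ioo p.1.1 p.1.2)).toReal := by
    intro p
    rw [habsint _ measurableSet_Ioo, hsetint _ measurableSet_Ioo]
    have h1 : (volume (I ∩ Set.Ioo p.1.1 p.1.2)).toReal ≤ p.1.2 - p.1.1 := by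
      have h2 : volume (I ∩ Set.Ioo p.1.1 p.1.2) ≤ ENNReal.ofReal (p.1.2 - p.1.1) := by
        rw [← Real.volume_Ioo]
        exact measure_mono Set.inter_subset_right
      calc (volume (I ∩ Set.Ioo p.1.1 p.1.2)).toReal
          ≤ (ENNReal.ofReal (p.1.2 - p.1.1)).toReal :=
            ENNReal.toReal_mono ENNReal.ofReal_ne_top h2
        _ ≤ p.1.2 - p.1.1 := le_of_eq (ENNReal.toReal_ofReal (by linarith [p.2]))
    linarith
  -- RHS value
  have hRHS : ∫ x in I, (if x ∈ E then t else 1) = L + τ * σ := by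
    have : ∀ x, (if x ∈ E then t else 1) = w x := fun x => rfl
    have hww : (fun x => if x ∈ E then t else 1) = w := rfl
    have h2 : ∫ x in I, w x = ∫ y in I, f y := by
      apply setIntegral_congr_fun hImeas
      intro y hy
      simp [hf, Set.indicator_of_mem hy]
    rw [hww, h2, hsetint I hImeas, Set.inter_self I,
      Set.inter_eq_self_of_subset_left hSsub, hIvol, ENNReal.toReal_ofReal hL0.le]
  -- maximal function facts
  set M : ℝ → ℝ := maximalFn1 f with hM
  have hMb := mFn_bounds hfi hfb ht0
  have hMmeas : Measurable M := measurable_mFn hfi hfb ht0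
  have hMi : IntegrableOn M I := by
    apply Measure.integrableOn_of_bounded hIfin hMmeas.aestronglyMeasurable (M := t)
    filter_upwards with x
    rw [Real.norm_eq_abs, abs_of_nonneg (hMb x).1]
    exact (hMb x).2
  have he3 : Real.exp 1 ≤ 3 := by have := Real.exp_one_lt_d9; linarith
  have he2 : (2:ℝ) ≤ Real.exp 1 := by have := Real.exp_one_gt_d9; linarith
  have hlogt1 : 1 ≤ Real.log t := by
    rw [← Real.log_exp 1]
    exact Real.log_le_log (Real.exp_pos 1) (le_trans he3 ht)
  rw [hRHS]
  have hUmeas : ∀ lam : ℝ, MeasurableSet {x | lam < M x} :=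
    fun lam => (isOpen_U hfi hfb ht0 lam).measurableSet
  rcases eq_or_lt_of_le hσ0 with hσzero | hσpos
  · -- case |S| = 0 : M ≤ 1
    have hvolS : volume S = 0 := by
      rcases (ENNReal.toReal_eq_zero_iff _).mp hσzero.symm with h | h
      · exact h
      · exact absurd h hSfin
    have hMle1 : ∀ x, M x ≤ 1 := by
      apply mFn_le_one
      intro p
      have h2 := hintf p
      have h3 : volume (S ∩ Set.Ioo p.1.1 p.1.2) = 0 :=
        le_antisymm (le_trans (measure_mono Set.inter_subset_left) (le_of_eq hvolS)) zero_le
      rw [h3] at h2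
      simpa using h2
    calc ∫ x in I, M x ≤ ∫ x in I, (1:ℝ) :=
          setIntegral_mono_on hMi
            (integrableOn_const hIfin) hImeas fun x _ => hMle1 x
      _ = L := by
          rw [setIntegral_const, smul_eq_mul, measureReal_def, hIvol, ENNReal.toReal_ofReal hL0.le, mul_one]
      _ ≤ 4 * Real.log t * (L + τ * σ) := by
          rw [← hσzero]
          nlinarith [hlogt1, hL0]
  · -- main case
    have hτpos : (0:ℝ) < τ := by simp only [hτdef]; linarith
    set α : ℝ := σ / L with hα
    have hα0 : 0 < α := div_pos hσpos hL0
    have hα1 : α ≤ 1 := (div_le_one hL0).mpr hσL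
    have hταL : τ * α * L = τ * σ := by field_simp [hα]; rw [hα, div_mul_cancel₀ _ hL0.ne']
    set lam0 : ℝ := 1 + τ * α with hlam0
    have hτα0 : 0 < τ * α := mul_pos hτpos hα0
    have hlam01 : 1 < lam0 := by simp only [hlam0]; linarith
    have hlam0t : lam0 ≤ t := by
      simp only [hlam0, hτdef]
      nlinarith
    set D : ℝ → ℝ := fun lam => ((volume.restrict I) {x | lam < M x}).toReal with hD
    have hDapp : ∀ lam, D lam = (volume ({x | lam < M x} ∩ I)).toReal := by
      intro lam
      simp only [hD]
      rw [Measure.restrict_apply (hUmeas lam)]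
    have hIcap_fin : ∀ lam, volume ({x | lam < M x} ∩ I) ≠ ⊤ :=
      fun lam => ((measure_mono Set.inter_subset_right).trans_lt (Ne.lt_top hIfin)).ne
    have hDnn : ∀ lam, 0 ≤ D lam := fun lam => ENNReal.toReal_nonneg
    have hDle : ∀ lam, D lam ≤ L := by
      intro lam
      rw [hDapp]
      have h1 : volume ({x | lam < M x} ∩ I) ≤ ENNReal.ofReal L := by
        rw [← hIvol]; exact measure_mono Set.inter_subset_right
      calc (volume ({x | lam < M x} ∩ I)).toReal ≤ (ENNReal.ofReal L).toReal :=
            ENNReal.toReal_mono ENNReal.ofReal_ne_top h1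
        _ = L := ENNReal.toReal_ofReal hL0.le
    have hDzero : ∀ lam, t ≤ lam → D lam = 0 := by
      intro lam hl
      rw [hDapp]
      have h1 : {x | lam < M x} = ∅ := by
        apply Set.eq_empty_iff_forall_notMem.mpr
        intro x hx
        exact absurd (lt_of_le_of_lt (le_trans (hMb x).2 hl) hx) (lt_irrefl _)
      rw [h1, Set.empty_inter]
      simp
    have hDweak : ∀ lam, 1 < lam → D lam ≤ τ / (lam - 1) * (2 * σ) := by
      intro lam hl
      rw [hDapp]
      have h1 : volume ({x | lam < M x} ∩ I) ≤
          ENNReal.ofReal (τ / (lam - 1)) * (2 * volume S) :=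
        le_trans (measure_mono Set.inter_subset_left)
          (weak_type hfi hfb ht0 hSmeas hSfin hτ0 hintf hl)
      have hne : ENNReal.ofReal (τ / (lam - 1)) * (2 * volume S) ≠ ⊤ :=
        ENNReal.mul_ne_top ENNReal.ofReal_ne_top (ENNReal.mul_ne_top (by norm_num) hSfin)
      refine le_trans (ENNReal.toReal_mono hne h1) (le_of_eq ?_)
      rw [ENNReal.toReal_mul, ENNReal.toReal_ofReal (div_nonneg hτ0 (by linarith)),
        ENNReal.toReal_mul]
      norm_num [hσdef]
    have hDanti : Antitone D := by
      intro l1 l2 h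
      rw [hDapp, hDapp]
      apply ENNReal.toReal_mono (hIcap_fin l1)
      apply measure_mono
      apply Set.inter_subset_inter_left
      intro x hx
      exact lt_of_le_of_lt h hx
    have hDmeas : Measurable D := hDanti.measurable
    have hDint : IntegrableOn D (Set.Ioi 0) := by
      apply Integrable.mono' (g := (Set.Ioc (0:ℝ) t).indicator fun _ => L)
      · rw [integrable_indicator_iff measurableSet_Ioc]
        refine integrableOn_const (lt_of_le_of_lt (Measure.restrict_le_self _) ?_).ne
        rw [Real.volume_Ioc]
        exact ENNReal.ofReal_lt_top
      · exact hDmeas.aestronglyMeasurable.restrict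
      · filter_upwards [ae_restrict_mem measurableSet_Ioi] with lam hlam
        rw [Real.norm_eq_abs, abs_of_nonneg (hDnn lam)]
        rcases le_total lam t with h | h
        · have : lam ∈ Set.Ioc (0:ℝ) t := ⟨hlam, h⟩
          rw [Set.indicator_of_mem this]
          exact hDle lam
        · rw [hDzero lam h]
          exact Set.indicator_nonneg (fun _ _ => hL0.le) _
    -- layer cake
    have hlc : ∫ x in I, M x = ∫ lam in Set.Ioi (0:ℝ), D lam := by
      have := Integrable.integral_eq_integral_meas_lt hMi
        (Filter.Eventually.of_forall fun x => (hMb x).1)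
      simpa [hD, measureReal_def] using this
    -- split the integral
    have hd1 : Disjoint (Set.Ioc (0:ℝ) lam0) (Set.Ioi lam0) := by
      apply Set.disjoint_left.mpr
      intro x hx1 hx2
      exact absurd hx1.2 (not_le.mpr hx2)
    have hd2 : Disjoint (Set.Ioc lam0 t) (Set.Ioi t) := by
      apply Set.disjoint_left.mpr
      intro x hx1 hx2
      exact absurd hx1.2 (not_le.mpr hx2)
    have hu1 : Set.Ioc (0:ℝ) lam0 ∪ Set.Ioi lam0 = Set.Ioi 0 :=
      Set.Ioc_union_Ioi_eq_Ioi (by linarith)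
    have hu2 : Set.Ioc lam0 t ∪ Set.Ioi t = Set.Ioi lam0 :=
      Set.Ioc_union_Ioi_eq_Ioi hlam0t
    have hsub1 : Set.Ioc (0:ℝ) lam0 ⊆ Set.Ioi 0 := fun x hx => hx.1
    have hsub2 : Set.Ioi lam0 ⊆ Set.Ioi 0 := fun x hx => lt_trans (by linarith : (0:ℝ) < lam0) hx
    have hsub3 : Set.Ioc lam0 t ⊆ Set.Ioi 0 := fun x hx => lt_trans (by linarith) hx.1
    have hsub4 : Set.Ioi t ⊆ Set.Ioi 0 := fun x hx => lt_trans (by linarith : (0:ℝ) < t) hx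
    have hsplit : ∫ lam in Set.Ioi (0:ℝ), D lam =
        (∫ lam in Set.Ioc (0:ℝ) lam0, D lam) + ((∫ lam in Set.Ioc lam0 t, D lam)
          + ∫ lam in Set.Ioi t, D lam) := by
      rw [← setIntegral_union hd2 measurableSet_Ioi (hDint.mono_set hsub3)
        (hDint.mono_set hsub4), hu2]
      rw [← setIntegral_union hd1 measurableSet_Ioi (hDint.mono_set hsub1)
        (hDint.mono_set hsub2), hu1]
    have hterm3 : ∫ lam in Set.Ioi t, D lam = 0 := by
      rw [setIntegral_congr_fun measurableSet_Ioi
        (fun lam hl => hDzero lam (le_of_lt hl))]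
      exact integral_zero _ _
    have hterm1 : ∫ lam in Set.Ioc (0:ℝ) lam0, D lam ≤ L * lam0 := by
      calc ∫ lam in Set.Ioc (0:ℝ) lam0, D lam ≤ ∫ lam in Set.Ioc (0:ℝ) lam0, L :=
            setIntegral_mono_on (hDint.mono_set hsub1)
              (integrableOn_const (by rw [Real.volume_Ioc]; exact ENNReal.ofReal_ne_top))
              measurableSet_Ioc (fun lam _ => hDle lam)
        _ = L * lam0 := by
            rw [setIntegral_const, smul_eq_mul, measureReal_def, Real.volume_Ioc,
              ENNReal.toReal_ofReal (by linarith), mul_comm]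
            norm_num
    have hterm2 : ∫ lam in Set.Ioc lam0 t, D lam ≤ 2 * (τ * σ) * Real.log (L / σ) := by
      have hcont : ContinuousOn (fun lam : ℝ => τ / (lam - 1) * (2 * σ)) (Set.Icc lam0 t) := by
        apply ContinuousOn.mul _ continuousOn_const
        apply ContinuousOn.div continuousOn_const
        · exact (continuous_sub_right 1).continuousOn
        · intro x hx
          have := hx.1
          intro h0
          have : x - 1 = 0 := h0
          have : (1:ℝ) < x := lt_of_lt_of_le hlam01 hx.1
          linarith
      have hIg2 : IntegrableOn (fun lam : ℝ => τ / (lam - 1) * (2 * σ)) (Set.Ioc lam0 t) :=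
        (hcont.integrableOn_Icc).mono_set Set.Ioc_subset_Icc_self
      have hle : ∫ lam in Set.Ioc lam0 t, D lam ≤
          ∫ lam in Set.Ioc lam0 t, τ / (lam - 1) * (2 * σ) :=
        setIntegral_mono_on (hDint.mono_set hsub3) hIg2 measurableSet_Ioc
          (fun lam hl => hDweak lam (lt_trans hlam01 hl.1))
      have hval : ∫ lam in Set.Ioc lam0 t, τ / (lam - 1) * (2 * σ) =
          2 * (τ * σ) * Real.log (L / σ) := by
        rw [← intervalIntegral.integral_of_le hlam0t]
        have heq : ∀ lam : ℝ, τ / (lam - 1) * (2 * σ) = (τ * (2 * σ)) * (lam - 1)⁻¹ := by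
          intro lam; field_simp
        simp_rw [heq]
        rw [intervalIntegral.integral_const_mul]
        rw [intervalIntegral.integral_comp_sub_right (fun x => x⁻¹) 1]
        rw [integral_inv]
        · rw [show t - 1 = τ by rw [hτdef], show lam0 - 1 = τ * α by rw [hlam0]; ring]
          have : τ / (τ * α) = L / σ := by
            field_simp [hα]
            rw [hα, div_mul_cancel₀ _ hL0.ne']
          rw [this]
          ring
        · apply Set.notMem_uIcc_of_lt
          · linarith
          · linarith
      linarith [hle, le_of_eq hval]
    have hfinal : L + τ * σ + 2 * (τ * σ) * Real.log (L / σ) ≤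
        4 * Real.log t * (L + τ * σ) :=
      final_numeric_ineq ht hτdef hσpos hσL hL0
    calc ∫ x in I, M x = ∫ lam in Set.Ioi (0:ℝ), D lam := hlc
      _ = (∫ lam in Set.Ioc (0:ℝ) lam0, D lam) + ((∫ lam in Set.Ioc lam0 t, D lam)
          + ∫ lam in Set.Ioi t, D lam) := hsplit
      _ ≤ L * lam0 + (2 * (τ * σ) * Real.log (L / σ) + 0) := by
          apply add_le_add hterm1
          apply add_le_add hterm2 (le_of_eq hterm3)
      _ = L + τ * σ + 2 * (τ * σ) * Real.log (L / σ) := by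
          rw [hlam0]
          have : L * (1 + τ * α) = L + τ * σ := by
            rw [mul_add, mul_one]
            rw [show L * (τ * α) = τ * α * L by ring, hταL]
          rw [this]; ring
      _ ≤ 4 * Real.log t * (L + τ * σ) := hfinal

end
end
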